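/- The original ER algorithm (equivalently, the reliability discounting and combination scheme) violates the consensus axiom: let H = {H_1,…,H_N} with N ≥ 2, fix a grade k, and suppose all L assessments are precisely assessed to grade H_k (β_{k,i} = 1 and β_{n,i} = 0 for n ≠ k, for every i), with weights w_i ∈ [0,1]. Then the Dempster combination of the reliability-discounted assessment BBAs m_1^{w_1} ⊕ ⋯ ⊕ m_L^{w_L} is well defined (all conflicts are 0) and assigns mass ∏_{i=1}^L (1 − w_i) to H and 1 − ∏_{i=1}^L (1 − w_i) to {H_k}; in particular, if every w_i < 1 then the combined mass on H is strictly positive, so the general attribute is not precisely assessed to H_k. -/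
import Mathlib


open Finset

/-- A basic belief assignment (BBA) on a finite nonempty frame `Θ`. -/
def IsBBA {Θ : Type*} [Fintype Θ] [DecidableEq Θ] (m : Finset Θ → ℝ) : Prop :=
  m ∅ = 0 ∧ (∀ A, 0 ≤ m A) ∧ ∑ A : Finset Θ, m A = 1

/-- Shafer's reliability discounting of `m` by the reliability factor `α`. -/
def rdiscount {Θ : Type*} [Fintype Θ] [DecidableEq Θ] (α : ℝ) (m : Finset Θ → ℝ) :
    Finset Θ → ℝ :=
  fun A => if A = Finset.univ then α * m A + (1 - α) else α * m A

/-- The conflict between two mass functions. -/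
def conflict {Θ : Type*} [Fintype Θ] [DecidableEq Θ] (m1 m2 : Finset Θ → ℝ) : ℝ :=
  ∑ B : Finset Θ, ∑ C : Finset Θ, if B ∩ C = ∅ then m1 B * m2 C else 0

/-- Dempster's rule of combination. -/
noncomputable def dempster {Θ : Type*} [Fintype Θ] [DecidableEq Θ] (m1 m2 : Finset Θ → ℝ) :
    Finset Θ → ℝ :=
  fun A => if A = ∅ then 0
    else (∑ B : Finset Θ, ∑ C : Finset Θ, if B ∩ C = A then m1 B * m2 C else 0) /
      (1 - conflict m1 m2)

/-- Iterated Dempster combination of `d 0, …, d i`. -/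
noncomputable def combUpTo {Θ : Type*} [Fintype Θ] [DecidableEq Θ] (d : ℕ → Finset Θ → ℝ) :
    ℕ → Finset Θ → ℝ
  | 0 => d 0
  | i + 1 => dempster (combUpTo d (i)) (d (i + 1))

/-- The assessment BBA on the frame `{H_1,…,H_N}` determined by belief degrees `β`. -/
def assessBBA {N : ℕ} (β : Fin N → ℝ) : Finset (Fin N) → ℝ :=
  fun A => if A = Finset.univ then 1 - ∑ n, β n
    else ∑ n : Fin N, if A = {n} then β n else 0

/-- An importance basic belief assignment (IBBA): `ω` is the mass on the
indecisiveness element `Ω`. -/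
def IsIBBA {Θ : Type*} [Fintype Θ] [DecidableEq Θ] (m : Finset Θ → ℝ) (ω : ℝ) : Prop :=
  m ∅ = 0 ∧ (∀ A, 0 ≤ m A) ∧ 0 ≤ ω ∧ (∑ A : Finset Θ, m A) + ω = 1

/-- Importance discounting of a BBA `m` by the importance factor `β`. -/
def impDiscount {Θ : Type*} [Fintype Θ] [DecidableEq Θ] (β : ℝ) (m : Finset Θ → ℝ) :
    (Finset Θ → ℝ) × ℝ :=
  (fun A => β * m A, 1 - β)

/-- The extended Dempster rule of combination of two IBBAs. -/
noncomputable def edComb {Θ : Type*} [Fintype Θ] [DecidableEq Θ]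
    (p q : (Finset Θ → ℝ) × ℝ) : (Finset Θ → ℝ) × ℝ :=
  (fun A => if A = ∅ then 0
      else (1 - conflict p.1 q.1)⁻¹ *
        ((∑ B : Finset Θ, ∑ C : Finset Θ, if B ∩ C = A then p.1 B * q.1 C else 0) +
          p.1 A * q.2 + p.2 * q.1 A),
    (1 - conflict p.1 q.1)⁻¹ * (p.2 * q.2))

/-- Iterated extended Dempster combination of `d 0, …, d i`. -/
noncomputable def edCombUpTo {Θ : Type*} [Fintype Θ] [DecidableEq Θ] (d : ℕ → (Finset Θ → ℝ) × ℝ) :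
    ℕ → (Finset Θ → ℝ) × ℝ
  | 0 => d 0
  | i + 1 => edComb (edCombUpTo d i) (d (i + 1))

/-- The singleton conflict `Σ_{j≠p} m1({H_j})·m2({H_p})`. -/
def singConflict {N : ℕ} (m1 m2 : Finset (Fin N) → ℝ) : ℝ :=
  ∑ j : Fin N, ∑ p : Fin N, if j ≠ p then m1 {j} * m2 {p} else 0

/-- One recursive aggregation step of the original ER algorithm. -/
noncomputable def erStep {N : ℕ} (s : (Fin N → ℝ) × ℝ) (b : Fin N → ℝ) (h : ℝ) : (Fin N → ℝ) × ℝ :=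
  (fun n => (1 - ∑ j : Fin N, ∑ p : Fin N, if p ≠ j then s.1 j * b p else 0)⁻¹ *
      (s.1 n * b n + s.1 n * h + s.2 * b n),
   (1 - ∑ j : Fin N, ∑ p : Fin N, if p ≠ j then s.1 j * b p else 0)⁻¹ * (s.2 * h))

/-- The recursively defined masses of the original ER algorithm. -/
noncomputable def erSeq {N : ℕ} (b : ℕ → Fin N → ℝ) (h : ℕ → ℝ) : ℕ → (Fin N → ℝ) × ℝ
  | 0 => (b 0, h 0)
  | i + 1 => erStep (erSeq b h i) (b (i + 1)) (h (i + 1))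

/-- One recursive aggregation step of the modified ER algorithm, on triples
`(masses on singletons, m̃_H, m̄_H)`. -/
noncomputable def merStep {N : ℕ} (s : (Fin N → ℝ) × ℝ × ℝ) (b : Fin N → ℝ) (tld brd : ℝ) :
    (Fin N → ℝ) × ℝ × ℝ :=
  (fun n => (1 - ∑ j : Fin N, ∑ p : Fin N, if p ≠ j then s.1 j * b p else 0)⁻¹ *
      (s.1 n * b n + s.1 n * (brd + tld) + (s.2.2 + s.2.1) * b n),
   (1 - ∑ j : Fin N, ∑ p : Fin N, if p ≠ j then s.1 j * b p else 0)⁻¹ *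
      (s.2.1 * tld + s.2.1 * brd + s.2.2 * tld),
   (1 - ∑ j : Fin N, ∑ p : Fin N, if p ≠ j then s.1 j * b p else 0)⁻¹ * (s.2.2 * brd))

/-- The recursively defined masses of the modified ER algorithm. -/
noncomputable def merSeq {N : ℕ} (b : ℕ → Fin N → ℝ) (tld brd : ℕ → ℝ) : ℕ → (Fin N → ℝ) × ℝ × ℝ
  | 0 => (b 0, tld 0, brd 0)
  | i + 1 => merStep (merSeq b tld brd i) (b (i + 1)) (tld (i + 1)) (brd (i + 1))

/-- Reliability-importance discounting: the mass-function part `m^{α,β}`. -/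
def riDiscount {Θ : Type*} [Fintype Θ] [DecidableEq Θ] (α β : ℝ) (m : Finset Θ → ℝ) :
    Finset Θ → ℝ :=
  fun A => if A = Finset.univ then α * β * m A + (1 - α) * β else α * β * m A

/-- Auxiliary: the mass function with mass `a` on `univ` and `1-a` on `{k}`. -/
def funcOf {N : ℕ} (k : Fin N) (a : ℝ) : Finset (Fin N) → ℝ :=
  fun A => if A = Finset.univ then a else if A = {k} then 1 - a else 0

lemma singleton_ne_univ {N : ℕ} (hN : 2 ≤ N) (k : Fin N) :
    ({k} : Finset (Fin N)) ≠ Finset.univ := by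
  intro h
  have := congrArg Finset.card h
  simp [Finset.card_univ] at this
  omega

lemma univ_nonempty' {N : ℕ} (hN : 2 ≤ N) : (Finset.univ : Finset (Fin N)) ≠ ∅ := by
  simp [Finset.univ_eq_empty_iff]
  exact Fin.pos_iff_nonempty.mp (by omega)

lemma sum2pt {N : ℕ} (hN : 2 ≤ N) (k : Fin N) (f : Finset (Fin N) → ℝ)
    (hf : ∀ A, A ≠ Finset.univ → A ≠ {k} → f A = 0) :
    ∑ A : Finset (Fin N), f A = f Finset.univ + f {k} := by
  rw [← Finset.sum_pair (singleton_ne_univ hN k).symm]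
  exact (Finset.sum_subset (Finset.subset_univ _) (by
    intro A _ hA
    simp only [Finset.mem_insert, Finset.mem_singleton, not_or] at hA
    exact hf A hA.1 hA.2)).symm

lemma d_eq {N : ℕ} (hN : 2 ≤ N) (k : Fin N) (α : ℝ) :
    rdiscount α (assessBBA (fun n => if n = k then (1 : ℝ) else 0)) = funcOf k (1 - α) := by
  funext A
  have hassess : assessBBA (fun n => if n = k then (1 : ℝ) else 0) A
      = if A = Finset.univ then 0 else if A = {k} then 1 else 0 := by
    unfold assessBBA
    by_cases h : A = Finset.univ
    · simp [h]
    · simp only [h, if_false]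
      by_cases h2 : A = {k}
      · simp [h2, Finset.singleton_inj]
      · rw [if_neg h2]
        apply Finset.sum_eq_zero
        intro n _
        by_cases hn : A = {n}
        · have : n ≠ k := by rintro rfl; exact h2 hn
          simp [hn, this]
        · simp [hn]
  unfold rdiscount funcOf
  rw [hassess]
  by_cases h : A = Finset.univ
  · simp [h]
  · by_cases h2 : A = {k} <;> simp [h, h2, singleton_ne_univ hN k]

lemma conflict_funcOf {N : ℕ} (hN : 2 ≤ N) (k : Fin N) (a b : ℝ) :
    conflict (funcOf k a) (funcOf k b) = 0 := by
  unfold conflict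
  apply Finset.sum_eq_zero
  intro B _
  apply Finset.sum_eq_zero
  intro C _
  by_cases h : B ∩ C = ∅
  · rw [if_pos h]
    by_cases hB : B = Finset.univ <;> by_cases hB2 : B = {k} <;>
      by_cases hC : C = Finset.univ <;> by_cases hC2 : C = {k} <;>
      simp_all [funcOf, univ_nonempty' hN, Finset.singleton_ne_empty k]
  · rw [if_neg h]

lemma dempster_funcOf {N : ℕ} (hN : 2 ≤ N) (k : Fin N) (a b : ℝ) :
    dempster (funcOf k a) (funcOf k b) = funcOf k (a * b) := by
  have hku := singleton_ne_univ hN k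
  have hue := univ_nonempty' hN
  have hke : ({k} : Finset (Fin N)) ≠ ∅ := Finset.singleton_ne_empty k
  funext A
  unfold dempster
  rw [conflict_funcOf hN k a b]
  have hsum : ∀ A : Finset (Fin N),
      (∑ B : Finset (Fin N), ∑ C : Finset (Fin N),
        if B ∩ C = A then funcOf k a B * funcOf k b C else 0)
      = (if Finset.univ = A then a * b else 0)
        + ((if ({k} : Finset (Fin N)) = A then a * (1 - b) else 0)
          + ((if ({k} : Finset (Fin N)) = A then (1 - a) * b else 0)
            + (if ({k} : Finset (Fin N)) = A then (1 - a) * (1 - b) else 0))) := by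
    intro A
    rw [sum2pt hN k _ (by
      intro B hB1 hB2
      apply Finset.sum_eq_zero
      intro C _
      simp [funcOf, hB1, hB2])]
    rw [sum2pt hN k _ (by
      intro C hC1 hC2
      simp [funcOf, hC1, hC2]),
      sum2pt hN k _ (by
      intro C hC1 hC2
      simp [funcOf, hC1, hC2])]
    simp [funcOf, hku, Finset.univ_inter, Finset.inter_univ, Finset.inter_self, add_assoc]
  rw [hsum]
  by_cases h : A = ∅
  · subst h; simp [funcOf, Ne.symm hue, Ne.symm hke]
  · by_cases h1 : A = Finset.univ
    · subst h1; simp [funcOf, hue, hku]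
    · by_cases h2 : A = {k}
      · subst h2
        simp [funcOf, hke, hku, Ne.symm hku]
        ring
      · simp [funcOf, h, h1, h2, Ne.symm h1, Ne.symm h2]

lemma combUpTo_eq {N : ℕ} (hN : 2 ≤ N) (k : Fin N) (w : ℕ → ℝ)
    (d : ℕ → Finset (Fin N) → ℝ)
    (hd : ∀ j, d j = rdiscount (w j)
      (assessBBA (fun n => if n = k then (1 : ℝ) else 0))) (i : ℕ) :
    combUpTo d i = funcOf k (∏ j ∈ Finset.range (i + 1), (1 - w j)) := by
  induction i with
  | zero => simp [combUpTo, hd 0, d_eq hN k]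
  | succ i ih =>
    rw [show combUpTo d (i + 1) = dempster (combUpTo d i) (d (i + 1)) from rfl,
      ih, hd (i + 1), d_eq hN k, dempster_funcOf hN k, ← Finset.prod_range_succ]

/-- the original ER algorithm (the reliability discounting and
combination scheme) violates the consensus axiom. -/
theorem originalER_violates_consensus (N L : ℕ) (hN : 2 ≤ N) (hL : 1 ≤ L)
    (k : Fin N) (w : ℕ → ℝ) (hw : ∀ i < L, 0 ≤ w i ∧ w i ≤ 1)
    -- the reliability-discounted assessment BBAs of the precise assessments to H_k
    (d : ℕ → Finset (Fin N) → ℝ)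
    (hd : ∀ j, d j = rdiscount (w j)
      (assessBBA (fun n => if n = k then (1 : ℝ) else 0))) :
    (∀ i, i + 1 < L → conflict (combUpTo d i) (d (i + 1)) = 0) ∧
    combUpTo d (L - 1) Finset.univ = ∏ i ∈ Finset.range L, (1 - w i) ∧
    combUpTo d (L - 1) {k} = 1 - ∏ i ∈ Finset.range L, (1 - w i) ∧
    ((∀ i < L, w i < 1) → 0 < combUpTo d (L - 1) Finset.univ) := by
  have hC := combUpTo_eq hN k w d hd
  have hL1 : L - 1 + 1 = L := Nat.succ_pred_eq_of_pos hL
  have hku := singleton_ne_univ hN k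
  refine ⟨?_, ?_, ?_, ?_⟩
  · intro i _
    rw [hC i, hd (i + 1), d_eq hN k]
    exact conflict_funcOf hN k _ _
  · rw [hC (L - 1), hL1]; simp [funcOf]
  · rw [hC (L - 1), hL1]; simp [funcOf, hku]
  · intro hwlt
    rw [hC (L - 1), hL1]
    simp only [funcOf, if_pos rfl]
    exact Finset.prod_pos fun i hi => by
      have := hwlt i (Finset.mem_range.mp hi); linarith
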